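/- Let n ≥ 2 be an integer and let p ∈ (0,1) satisfy p^((n+1)/(n−1)) + p = 1. Define p_k = p^((k−1)/(n−1)) − p^(k/(n−1)) for 1 ≤ k ≤ n−1, and p_n = p. Then for all integers m, k with 1 ≤ m < k ≤ n, 1 − p·(p_k + ... + p_n)^2 / (p_m + ... + p_n)^2 ≥ p. -/

import Mathlib

/-- With `n ≥ 2`, `p ∈ (0,1)`, `p ^ ((n+1)/(n-1)) + p = 1`, and
`P k = p ^ ((k-1)/(n-1)) - p ^ (k/(n-1))` for `1 ≤ k ≤ n-1`, `P n = p`,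
for all `1 ≤ m < k ≤ n` we have
`1 - p (P k + ⋯ + P n)² / (P m + ⋯ + P n)² ≥ p`. -/
theorem stmt_6 (n : ℕ) (hn : 2 ≤ n) (p : ℝ) (hp : p ∈ Set.Ioo (0 : ℝ) 1)
    (hroot : p ^ (((n : ℝ) + 1) / ((n : ℝ) - 1)) + p = 1)
    (P : ℕ → ℝ)
    (hP : ∀ k, 1 ≤ k → k ≤ n - 1 →
      P k = p ^ (((k : ℝ) - 1) / ((n : ℝ) - 1)) - p ^ ((k : ℝ) / ((n : ℝ) - 1)))
    (hPn : P n = p) :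
    ∀ m k, 1 ≤ m → m < k → k ≤ n →
      1 - p * (∑ j ∈ Finset.Icc k n, P j) ^ 2 /
        (∑ j ∈ Finset.Icc m n, P j) ^ 2 ≥ p := by
  obtain ⟨hp0, hp1⟩ := hp
  have hnpos : (0:ℝ) < (n:ℝ) - 1 := by
    have : (2:ℝ) ≤ (n:ℝ) := by exact_mod_cast hn
    linarith
  -- telescoping sum
  have key : ∀ t m, 1 ≤ m → m + t = n →
      ∑ j ∈ Finset.Icc m n, P j = p ^ (((m:ℝ) - 1) / ((n:ℝ) - 1)) := by
    intro t
    induction t with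
    | zero =>
      intro m hm hmn
      simp only [Nat.add_zero] at hmn
      subst hmn
      rw [Finset.Icc_self, Finset.sum_singleton, hPn]
      rw [show ((m:ℝ) - 1) / ((m:ℝ) - 1) = 1 from div_self (by linarith), Real.rpow_one]
    | succ t ih =>
      intro m hm hmn
      have hmn' : m < n := by omega
      rw [← Finset.Ioc_insert_left hmn'.le, Finset.sum_insert (by simp),
        show Finset.Ioc m n = Finset.Icc (m+1) n from (Finset.Icc_add_one_left_eq_Ioc (a := m) (b := n)).symm,
        ih (m+1) (by omega) (by omega), hP m hm (by omega)]
      push_cast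
      ring_nf
  intro m k hm hmk hkn
  have hSk := key (n - k) k (by omega) (by omega)
  have hSm := key (n - m) m hm (by omega)
  rw [hSk, hSm]
  set a : ℝ := ((k:ℝ) - 1) / ((n:ℝ) - 1)
  set b : ℝ := ((m:ℝ) - 1) / ((n:ℝ) - 1)
  have hsq : ∀ x : ℝ, (p ^ x) ^ 2 = p ^ (x * 2) := by
    intro x
    rw [Real.rpow_mul hp0.le]
    norm_num
  have hmul : p * p ^ (a * 2) = p ^ (1 + a * 2) := by
    rw [Real.rpow_add hp0, Real.rpow_one]
  rw [hsq, hsq, hmul, ← Real.rpow_sub hp0]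
  rw [show 1 + a * 2 - b * 2 = 1 + (a * 2 - b * 2) by ring]
  have hexp : ((n:ℝ) + 1) / ((n:ℝ) - 1) ≤ 1 + (a * 2 - b * 2) := by
    have hk : (m:ℝ) + 1 ≤ (k:ℝ) := by exact_mod_cast hmk
    rw [show 1 + (a * 2 - b * 2)
        = (((n:ℝ) - 1) + ((k:ℝ) - 1) * 2 - ((m:ℝ) - 1) * 2) / ((n:ℝ) - 1) by
      simp only [a, b]; field_simp; ring]
    rw [div_le_div_iff_of_pos_right hnpos]
    linarith
  have hle : p ^ (1 + (a * 2 - b * 2)) ≤ p ^ (((n:ℝ) + 1) / ((n:ℝ) - 1)) :=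
    Real.rpow_le_rpow_of_exponent_ge hp0 hp1.le hexp
  linarith
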